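/- Let G be transitive on Ω with a G-invariant partition B, and suppose σ_i, ρ_i, σ_j, ρ_j ∈ G each fix every block of B setwise, where σ_i and σ_j commute, ρ_i has prime order p_i, and for each block B ∈ B there exists k_B with 1 ≤ k_B ≤ p_i − 1 such that σ_i agrees with ρ_i^{k_B} on every point of B. Then σ_j commutes with ρ_i. -/

import Mathlib

/-- If σᵢ, ρᵢ, σⱼ, ρⱼ ∈ G fix every block of a G-invariant partition B
setwise, σᵢ commutes with σⱼ, ρᵢ has prime order pᵢ, and on each block B the
permutation σᵢ agrees pointwise with ρᵢ^{k_B} for some 1 ≤ k_B ≤ pᵢ − 1, then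
σⱼ commutes with ρᵢ. -/
theorem stmt_12 {Ω : Type*} (G : Subgroup (Equiv.Perm Ω))
    (htrans : ∀ x y : Ω, ∃ g ∈ G, g x = y)
    (B : Set (Set Ω)) (hB : Setoid.IsPartition B)
    (hinv : ∀ b ∈ B, ∀ g ∈ G, (⇑g) '' b ∈ B)
    (σi σj ρi ρj : Equiv.Perm Ω)
    (hσiG : σi ∈ G) (hσjG : σj ∈ G) (hρiG : ρi ∈ G) (hρjG : ρj ∈ G)
    (hfixσi : ∀ b ∈ B, ∀ x ∈ b, σi x ∈ b)
    (hfixσj : ∀ b ∈ B, ∀ x ∈ b, σj x ∈ b)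
    (hfixρi : ∀ b ∈ B, ∀ x ∈ b, ρi x ∈ b)
    (hfixρj : ∀ b ∈ B, ∀ x ∈ b, ρj x ∈ b)
    (hcomm : Commute σi σj)
    (pi : ℕ) (hpi : pi.Prime) (hord : orderOf ρi = pi)
    (hk : ∀ b ∈ B, ∃ k : ℕ, 1 ≤ k ∧ k ≤ pi - 1 ∧ ∀ x ∈ b, σi x = (ρi ^ k) x) :
    Commute σj ρi := by
  have key : ∀ x : Ω, σj (ρi x) = ρi (σj x) := by
    intro x
    obtain ⟨b, ⟨hbB, hxb⟩, -⟩ := hB.2 x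
    obtain ⟨k, hk1, hk2, hagree⟩ := hk b hbB
    -- ρi powers preserve b
    have hρmem : ∀ (n : ℕ) (y : Ω), y ∈ b → (ρi ^ n) y ∈ b := by
      intro n
      induction n with
      | zero => intro y hy; simpa using hy
      | succ n ih =>
        intro y hy
        rw [pow_succ, Equiv.Perm.mul_apply]
        exact ih _ (hfixρi b hbB y hy)
    -- σi^m agrees with ρi^(k*m) on b
    have hagree' : ∀ (m : ℕ) (y : Ω), y ∈ b → (σi ^ m) y = (ρi ^ (k * m)) y := by
      intro m
      induction m with
      | zero => intro y hy; simp
      | succ m ih =>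
        intro y hy
        rw [pow_succ', Equiv.Perm.mul_apply, ih y hy, hagree _ (hρmem _ _ hy),
          ← Equiv.Perm.mul_apply, ← pow_add]
        congr 1
        ring
    -- find an inverse k' of k mod pi
    have hpi1 : 1 < pi := hpi.one_lt
    have hco : Nat.Coprime k pi :=
      Nat.Coprime.symm ((Nat.Prime.coprime_iff_not_dvd hpi).mpr
        (Nat.not_dvd_of_pos_of_lt hk1 (by omega)))
    obtain ⟨k', -, hkk'⟩ := Nat.exists_mul_mod_eq_one_of_coprime hco hpi1
    -- ρi agrees with σi^k' on b
    have hρσ : ∀ y ∈ b, ρi y = (σi ^ k') y := by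
      intro y hy
      have : ρi ^ (k * k') = ρi ^ 1 := by
        rw [pow_inj_mod, hord, hkk']
        simp [Nat.mod_eq_of_lt hpi1]
      rw [hagree' k' y hy, this, pow_one]
    have hσjx : σj x ∈ b := hfixσj b hbB x hxb
    calc σj (ρi x) = σj ((σi ^ k') x) := by rw [hρσ x hxb]
      _ = (σi ^ k') (σj x) := by
          have := (hcomm.symm.pow_right k').eq
          calc σj ((σi ^ k') x) = (σj * σi ^ k') x := rfl
            _ = (σi ^ k' * σj) x := by rw [this]
            _ = (σi ^ k') (σj x) := rfl
      _ = ρi (σj x) := (hρσ _ hσjx).symm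
  exact Equiv.ext fun x => by simpa [Equiv.Perm.mul_apply] using key x
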